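/- Let G = ({1,…,N}, E) be a connected undirected graph and let W be a random N×N matrix (on some probability space) such that: W is row-stochastic almost surely, its diagonal entries are positive almost surely, E[W] is doubly stochastic, and E[W]_{ij} > 0 whenever {i,j} ∈ E. Then there exists a scalar λ ∈ (0,1) such that for D = W − (1/N) 𝟙𝟙ᵀ W one has E[‖D z‖²] ≤ λ ‖z‖² for all z ∈ ℝ^N. -/

import Mathlib

open MeasureTheory

open Finset in
lemma sq_sum_sub_mean {N : ℕ} (v : Fin N → ℝ) :
    ∑ a, (v a - (N:ℝ)⁻¹ * ∑ i, v i) ^ 2 ≤ ∑ a, v a ^ 2 := by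
  rcases Nat.eq_zero_or_pos N with h | h
  · subst h; simp
  have hN : (0:ℝ) < N := by exact_mod_cast h
  set m := (N:ℝ)⁻¹ * ∑ i, v i with hm
  have hsum : ∑ i, v i = N * m := by rw [hm]; field_simp
  have key : ∑ a, (v a - m)^2 = (∑ a, v a ^ 2) - 2*m*(∑ a, v a) + N * m^2 := by
    have h2 : ∀ a : Fin N, (v a - m)^2 = v a ^2 - 2*m*v a + m^2 := fun a => by ring
    simp_rw [h2, Finset.sum_add_distrib, Finset.sum_sub_distrib, ← Finset.mul_sum,
      Finset.sum_const, Finset.card_univ, Fintype.card_fin, nsmul_eq_mul]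
  rw [key, hsum]
  nlinarith [mul_nonneg hN.le (sq_nonneg m)]

open Finset in
lemma row_identity {N : ℕ} (w y : Fin N → ℝ) (hw : ∑ j, w j = 1) :
    (∑ j, w j * y j)^2 = ∑ j, w j * y j ^ 2 - (1/2) * ∑ j, ∑ k, w j * w k * (y j - y k)^2 := by
  have e1 : (∑ j, w j * y j)^2 = ∑ j, ∑ k, (w j * y j) * (w k * y k) := by
    rw [sq, Finset.sum_mul_sum]
  have e2 : ∑ j, w j * y j ^2 = ∑ j, ∑ k, (w j * y j^2) * w k := by
    conv_lhs => rw [← mul_one (∑ j, w j * y j^2), ← hw, Finset.sum_mul_sum]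
  have e3 : ∑ j, w j * y j ^2 = ∑ j, ∑ k, w j * (w k * y k^2) := by
    conv_lhs => rw [← one_mul (∑ j, w j * y j^2), ← hw, Finset.sum_mul_sum]
  have main : ∑ j, ∑ k, w j * w k * (y j - y k)^2
      = ∑ j, ∑ k, ((w j * y j^2) * w k + w j * (w k * y k^2) - 2*((w j * y j) * (w k * y k))) :=
    Finset.sum_congr rfl fun j _ => Finset.sum_congr rfl fun k _ => by ring
  have split : ∑ j, ∑ k, ((w j * y j^2) * w k + w j * (w k * y k^2) - 2*((w j * y j) * (w k * y k)))
      = (∑ j, ∑ k, (w j * y j^2) * w k) + (∑ j, ∑ k, w j * (w k * y k^2))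
        - 2 * (∑ j, ∑ k, (w j * y j) * (w k * y k)) := by
    simp_rw [Finset.sum_sub_distrib, Finset.sum_add_distrib, ← Finset.mul_sum]
  rw [main, split, ← e1, ← e2, ← e3]
  ring

open Finset in
lemma edge_sum_smul {N : ℕ} (S : Finset (Fin N × Fin N)) (c : ℝ) (y : Fin N → ℝ) :
    ∑ p ∈ S, ((c * y p.1) - (c * y p.2))^2 = c^2 * ∑ p ∈ S, (y p.1 - y p.2)^2 := by
  rw [Finset.mul_sum]; exact Finset.sum_congr rfl fun p _ => by ring

open Finset in
lemma graph_gap {N : ℕ} (G : SimpleGraph (Fin N)) (hG : G.Connected)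
    (S : Finset (Fin N × Fin N)) (hSdef : ∀ p : Fin N × Fin N, p ∈ S ↔ G.Adj p.1 p.2) :
    ∃ ε > (0:ℝ), ∀ y : Fin N → ℝ, (∑ a, y a = 0) →
      ε * ∑ a, (y a)^2 ≤ ∑ p ∈ S, (y p.1 - y p.2)^2 := by
  have hNpos : 0 < N := by
    have : Nonempty (Fin N) := hG.nonempty
    exact Fin.pos_iff_nonempty.mpr this
  set g : (Fin N → ℝ) → ℝ := fun y => ∑ p ∈ S, (y p.1 - y p.2)^2 with hg
  have hgnonneg : ∀ y, 0 ≤ g y := fun y => Finset.sum_nonneg fun p _ => sq_nonneg _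
  have hgcont : Continuous g := by
    apply continuous_finset_sum
    intro p _
    exact ((continuous_apply p.1).sub (continuous_apply p.2)).pow 2
  set T : Set (Fin N → ℝ) := {y | (∑ a, (y a)^2) = 1 ∧ (∑ a, y a) = 0} with hT
  have hscale : ∀ y : Fin N → ℝ, (∑ a, y a = 0) → (0 < ∑ a, (y a)^2) →
      ∃ c : ℝ, 0 < c ∧ (fun a => c * y a) ∈ T ∧ g (fun a => c * y a) = c^2 * g y ∧
        c^2 * (∑ a, (y a)^2) = 1 := by
    intro y hs hpos
    set s := ∑ a, (y a)^2 with hsdef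
    have hcsq : ((Real.sqrt s)⁻¹)^2 = s⁻¹ := by
      rw [inv_pow, Real.sq_sqrt hpos.le]
    have hone : ((Real.sqrt s)⁻¹)^2 * s = 1 := by rw [hcsq]; exact inv_mul_cancel₀ hpos.ne'
    refine ⟨(Real.sqrt s)⁻¹, by positivity, ⟨?_, ?_⟩, edge_sum_smul S _ y, hone⟩
    · simp_rw [mul_pow, ← Finset.mul_sum]
      exact hone
    · rw [← Finset.mul_sum, hs, mul_zero]
  have hgposT : ∀ y ∈ T, 0 < g y := by
    intro y hy
    rcases lt_or_eq_of_le (hgnonneg y) with h | h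
    · exact h
    exfalso
    have hedge : ∀ j k, G.Adj j k → y j = y k := by
      intro j k hjk
      have hmem : (j, k) ∈ S := (hSdef (j,k)).mpr hjk
      have h0 : ((y j - y k)^2 : ℝ) = 0 := by
        have := (Finset.sum_eq_zero_iff_of_nonneg (fun p _ => sq_nonneg (y p.1 - y p.2))).mp
          h.symm (j, k) hmem
        exact this
      have := pow_eq_zero_iff (n := 2) (by norm_num) |>.mp h0
      linarith [sub_eq_zero.mp this]
    have hwalk : ∀ {j k : Fin N} (_ : G.Walk j k), y j = y k := by
      intro j k w
      induction w with
      | nil => rfl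
      | cons h p ih => exact (hedge _ _ h).trans ih
    have hconst : ∀ j k : Fin N, y j = y k := by
      intro j k
      obtain ⟨w⟩ := hG.preconnected j k
      exact hwalk w
    have i0 : Fin N := ⟨0, hNpos⟩
    have hsum0 : ∑ a, y a = (N : ℝ) * y i0 := by
      rw [Finset.sum_congr rfl fun a _ => hconst a i0]
      simp [Finset.card_univ, mul_comm]
    have hy0 : y i0 = 0 := by
      have h2 := hy.2
      rw [hsum0] at h2
      have hNne : (N:ℝ) ≠ 0 := by positivity
      exact (mul_eq_zero.mp h2).resolve_left hNne
    have hzz : (∑ a, (y a)^2) = 0 := Finset.sum_eq_zero fun a _ => by rw [hconst a i0, hy0]; ring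
    rw [hy.1] at hzz; norm_num at hzz
  by_cases hTne : T.Nonempty
  · have hclosed : IsClosed T := by
      apply IsClosed.inter
      · exact isClosed_eq (continuous_finset_sum _ fun a _ => (continuous_apply a).pow 2)
          continuous_const
      · exact isClosed_eq (continuous_finset_sum _ fun a _ => continuous_apply a) continuous_const
    have hbdd : Bornology.IsBounded T := by
      rw [Metric.isBounded_iff_subset_closedBall 0]
      refine ⟨1, fun y hy => ?_⟩
      rw [Metric.mem_closedBall, dist_zero_right]
      rw [pi_norm_le_iff_of_nonneg zero_le_one]
      intro i
      have h1 : (y i)^2 ≤ 1 := by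
        rw [← hy.1]
        exact Finset.single_le_sum (f := fun a => (y a)^2) (fun a _ => sq_nonneg _)
          (Finset.mem_univ i)
      rw [Real.norm_eq_abs, abs_le]
      constructor <;> nlinarith
    have hcpt : IsCompact T := Metric.isCompact_of_isClosed_isBounded hclosed hbdd
    obtain ⟨y₀, hy₀T, hmin⟩ := hcpt.exists_isMinOn hTne hgcont.continuousOn
    refine ⟨g y₀, hgposT y₀ hy₀T, ?_⟩
    intro y hysum
    rcases eq_or_lt_of_le (Finset.sum_nonneg (fun a _ => sq_nonneg (y a))) with h | h
    · rw [← h, mul_zero]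
      exact hgnonneg y
    · obtain ⟨c, hc, hcT, hgc, hcs⟩ := hscale y hysum h
      have hmle : g y₀ ≤ g (fun a => c * y a) := hmin hcT
      rw [hgc] at hmle
      calc g y₀ * ∑ a, (y a)^2 ≤ (c^2 * g y) * ∑ a, (y a)^2 := by
            apply mul_le_mul_of_nonneg_right hmle (Finset.sum_nonneg fun a _ => sq_nonneg _)
        _ = g y := by
            rw [mul_comm (c^2) (g y), mul_assoc, hcs, mul_one]
  · refine ⟨1, one_pos, fun y hysum => ?_⟩
    rcases eq_or_lt_of_le (Finset.sum_nonneg (fun a _ => sq_nonneg (y a))) with h | h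
    · rw [← h, mul_zero]; exact hgnonneg y
    · exfalso
      obtain ⟨c, hc, hcT, _, _⟩ := hscale y hysum h
      exact hTne ⟨_, hcT⟩

open Finset in
lemma pointwise_bound {N : ℕ} (hN : 1 ≤ N) (A : Matrix (Fin N) (Fin N) ℝ)
    (hnn : ∀ i j, 0 ≤ A i j) (hrs : ∀ i, ∑ j, A i j = 1)
    (S : Finset (Fin N × Fin N)) (z : Fin N → ℝ) :
    ∑ a, ((A - (N:ℝ)⁻¹ • ((Matrix.of fun _ _ => (1:ℝ)) * A)).mulVec z a)^2
      ≤ (∑ j, (∑ a, A a j) * (z j - (N:ℝ)⁻¹ * ∑ i, z i)^2)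
        - (1/2) * ∑ p ∈ S, A p.1 p.1 * A p.1 p.2 *
            ((z p.1 - (N:ℝ)⁻¹ * ∑ i, z i) - (z p.2 - (N:ℝ)⁻¹ * ∑ i, z i))^2 := by
  have hNR : (0:ℝ) < N := by exact_mod_cast hN
  set c : ℝ := (N:ℝ)⁻¹ * ∑ i, z i with hc
  set y : Fin N → ℝ := fun j => z j - c with hy
  set v : Fin N → ℝ := fun a => ∑ j, A a j * y j with hv
  have hD : ∀ a, (A - (N:ℝ)⁻¹ • ((Matrix.of fun _ _ => (1:ℝ)) * A)).mulVec z a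
      = (∑ j, A a j * z j) - (N:ℝ)⁻¹ * ∑ i, ∑ j, A i j * z j := by
    intro a
    simp only [Matrix.mulVec, dotProduct, Matrix.sub_apply, Matrix.smul_apply,
      Matrix.mul_apply, Matrix.of_apply, smul_eq_mul, one_mul]
    simp_rw [sub_mul]
    rw [Finset.sum_sub_distrib]
    congr 1
    rw [Finset.mul_sum]
    have l1 : ∀ x, (((N:ℝ))⁻¹ * ∑ i, A i x) * z x = ∑ i, ((N:ℝ))⁻¹ * (A i x * z x) := by
      intro x
      rw [mul_assoc, Finset.sum_mul, Finset.mul_sum]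
    simp_rw [l1]
    rw [Finset.sum_comm]
    exact Finset.sum_congr rfl fun i _ => by rw [Finset.mul_sum]
  have hrowz : ∀ i, ∑ j, A i j * z j = v i + c := by
    intro i
    have h1 : ∀ j, A i j * z j = A i j * y j + A i j * c := fun j => by
      simp only [hy]; ring
    rw [Finset.sum_congr rfl fun j _ => h1 j, Finset.sum_add_distrib, ← Finset.sum_mul, hrs,
      one_mul]
  have hD2 : ∀ a, (A - (N:ℝ)⁻¹ • ((Matrix.of fun _ _ => (1:ℝ)) * A)).mulVec z a
      = v a - (N:ℝ)⁻¹ * ∑ i, v i := by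
    intro a
    rw [hD a, hrowz a]
    rw [Finset.sum_congr rfl fun i _ => hrowz i, Finset.sum_add_distrib, Finset.sum_const,
      Finset.card_univ, Fintype.card_fin, nsmul_eq_mul]
    field_simp
    ring
  have step4 : ∑ a, ((A - (N:ℝ)⁻¹ • ((Matrix.of fun _ _ => (1:ℝ)) * A)).mulVec z a)^2
      ≤ ∑ a, v a ^ 2 := by
    rw [Finset.sum_congr rfl fun a _ => by rw [hD2 a]]
    exact sq_sum_sub_mean v
  have step5 : ∑ a, v a ^ 2 = (∑ a, ∑ j, A a j * y j ^ 2)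
      - (1/2) * ∑ a, ∑ j, ∑ k, A a j * A a k * (y j - y k)^2 := by
    rw [Finset.sum_congr rfl fun a _ => row_identity (fun j => A a j) y (hrs a),
      Finset.sum_sub_distrib, ← Finset.mul_sum]
  have step6 : (∑ a, ∑ j, A a j * y j ^ 2) = ∑ j, (∑ a, A a j) * y j ^ 2 := by
    rw [Finset.sum_comm]
    exact Finset.sum_congr rfl fun j _ => by rw [Finset.sum_mul]
  have step7 : ∑ p ∈ S, A p.1 p.1 * A p.1 p.2 * (y p.1 - y p.2)^2
      ≤ ∑ a, ∑ j, ∑ k, A a j * A a k * (y j - y k)^2 := by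
    have swap : ∑ a, ∑ j, ∑ k, A a j * A a k * (y j - y k)^2
        = ∑ j, ∑ k, ∑ a, A a j * A a k * (y j - y k)^2 := by
      rw [Finset.sum_comm]
      exact Finset.sum_congr rfl fun j _ => Finset.sum_comm
    rw [swap]
    have t1 : ∑ j, ∑ k, A j j * A j k * (y j - y k)^2
        ≤ ∑ j, ∑ k, ∑ a, A a j * A a k * (y j - y k)^2 := by
      apply Finset.sum_le_sum; intro j _
      apply Finset.sum_le_sum; intro k _
      exact Finset.single_le_sum (f := fun a => A a j * A a k * (y j - y k)^2)
        (fun a _ => mul_nonneg (mul_nonneg (hnn a j) (hnn a k)) (sq_nonneg _))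
        (Finset.mem_univ j)
    have t2 : ∑ p ∈ S, A p.1 p.1 * A p.1 p.2 * (y p.1 - y p.2)^2
        ≤ ∑ j, ∑ k, A j j * A j k * (y j - y k)^2 := by
      have hprod : ∑ j, ∑ k, A j j * A j k * (y j - y k)^2
          = ∑ p ∈ (Finset.univ : Finset (Fin N × Fin N)),
              A p.1 p.1 * A p.1 p.2 * (y p.1 - y p.2)^2 := by
        rw [← Finset.univ_product_univ, Finset.sum_product]
      rw [hprod]
      apply Finset.sum_le_sum_of_subset_of_nonneg (Finset.subset_univ S)
      intro p _ _
      exact mul_nonneg (mul_nonneg (hnn p.1 p.1) (hnn p.1 p.2)) (sq_nonneg _)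
    exact t2.trans t1
  have final := step4.trans_eq step5
  rw [step6] at final
  have hlast : (∑ j, (∑ a, A a j) * y j ^ 2)
      - (1/2) * (∑ a, ∑ j, ∑ k, A a j * A a k * (y j - y k)^2)
      ≤ (∑ j, (∑ a, A a j) * y j ^ 2)
        - (1/2) * ∑ p ∈ S, A p.1 p.1 * A p.1 p.2 * (y p.1 - y p.2)^2 := by
    linarith [step7]
  exact final.trans hlast

/-- For a connected graph `G` on `{1,…,N}` and a random matrix `W` that is a.s.
row-stochastic with a.s. positive diagonal, whose expectation is doubly stochastic with
`E[W]_{ij} > 0` on edges of `G`, there is `λ ∈ (0,1)` such that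
`E[‖(W − (1/N)𝟙𝟙ᵀ W) z‖²] ≤ λ ‖z‖²` for all `z ∈ ℝ^N`. -/
theorem stmt_11 {Ω : Type*} [MeasurableSpace Ω] (μ : Measure Ω) [IsProbabilityMeasure μ]
    (N : ℕ) (hN : 1 ≤ N)
    (G : SimpleGraph (Fin N)) (hG : G.Connected)
    (W : Ω → Matrix (Fin N) (Fin N) ℝ) (hWm : ∀ i j, Measurable (fun ω => W ω i j))
    (hrow : ∀ᵐ ω ∂μ, (∀ i j, 0 ≤ W ω i j) ∧ ∀ i, ∑ j, W ω i j = 1)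
    (hdiag : ∀ᵐ ω ∂μ, ∀ i, 0 < W ω i i)
    (hErow : ∀ i, ∑ j, ∫ ω, W ω i j ∂μ = 1)
    (hEcol : ∀ j, ∑ i, ∫ ω, W ω i j ∂μ = 1)
    (hEnn : ∀ i j, 0 ≤ ∫ ω, W ω i j ∂μ)
    (hEpos : ∀ i j, G.Adj i j → 0 < ∫ ω, W ω i j ∂μ) :
    ∃ lam : ℝ, lam ∈ Set.Ioo (0 : ℝ) 1 ∧ ∀ z : Fin N → ℝ,
      (∫ ω, ∑ a, ((W ω - (N : ℝ)⁻¹ • ((Matrix.of fun _ _ => (1 : ℝ)) * W ω)).mulVec z a) ^ 2 ∂μ)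
        ≤ lam * ∑ a, (z a) ^ 2 := by
  classical
  -- entries are a.e. in [0,1]
  have hWae01 : ∀ᵐ ω ∂μ, ∀ i j, 0 ≤ W ω i j ∧ W ω i j ≤ 1 := by
    filter_upwards [hrow] with ω hω
    intro i j
    refine ⟨hω.1 i j, ?_⟩
    calc W ω i j ≤ ∑ k, W ω i k :=
          Finset.single_le_sum (f := fun k => W ω i k) (fun k _ => hω.1 i k) (Finset.mem_univ j)
      _ = 1 := hω.2 i
  have hInt : ∀ i j, Integrable (fun ω => W ω i j) μ := by
    intro i j
    apply Integrable.mono' (integrable_const (1:ℝ)) (hWm i j).aestronglyMeasurable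
    filter_upwards [hWae01] with ω h
    rw [Real.norm_eq_abs, abs_le]
    exact ⟨by linarith [(h i j).1], (h i j).2⟩
  have hIntProd : ∀ i j k l, Integrable (fun ω => W ω i j * W ω k l) μ := by
    intro i j k l
    apply Integrable.mono' (integrable_const (1:ℝ))
      ((hWm i j).mul (hWm k l)).aestronglyMeasurable
    filter_upwards [hWae01] with ω h
    rw [Real.norm_eq_abs, abs_le]
    simp only [Pi.mul_apply]
    constructor
    · nlinarith [(h i j).1, (h k l).1]
    · nlinarith [(h i j).1, (h i j).2, (h k l).1, (h k l).2]
  -- the edge set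
  set S : Finset (Fin N × Fin N) := Finset.univ.filter (fun p => G.Adj p.1 p.2) with hSeq
  have hSdef : ∀ p : Fin N × Fin N, p ∈ S ↔ G.Adj p.1 p.2 := by
    intro p; simp [hSeq]
  -- F is positive on edges
  have hFpos : ∀ j k, G.Adj j k → 0 < ∫ ω, W ω j j * W ω j k ∂μ := by
    intro j k hjk
    have hnn_ae : 0 ≤ᵐ[μ] fun ω => W ω j j * W ω j k := by
      filter_upwards [hrow] with ω hω
      exact mul_nonneg (hω.1 j j) (hω.1 j k)
    rcases lt_or_eq_of_le (integral_nonneg_of_ae hnn_ae) with h | h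
    · exact h
    exfalso
    have hzero : (fun ω => W ω j j * W ω j k) =ᵐ[μ] 0 :=
      (integral_eq_zero_iff_of_nonneg_ae hnn_ae (hIntProd j j j k)).mp h.symm
    have hjk0 : (fun ω => W ω j k) =ᵐ[μ] 0 := by
      filter_upwards [hzero, hdiag] with ω h0 hd
      simp only [Pi.zero_apply] at h0 ⊢
      rcases mul_eq_zero.mp h0 with h' | h'
      · exact absurd h' (ne_of_gt (hd j))
      · exact h'
    have : ∫ ω, W ω j k ∂μ = 0 := by
      rw [integral_congr_ae hjk0]; simp
    linarith [hEpos j k hjk]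
  -- master inequality
  have master : ∀ z : Fin N → ℝ,
      (∫ ω, ∑ a, ((W ω - (N : ℝ)⁻¹ • ((Matrix.of fun _ _ => (1 : ℝ)) * W ω)).mulVec z a) ^ 2 ∂μ)
      ≤ (∑ j, (z j - (N:ℝ)⁻¹ * ∑ i, z i)^2)
        - (1/2) * ∑ p ∈ S, (∫ ω, W ω p.1 p.1 * W ω p.1 p.2 ∂μ) *
            ((z p.1 - (N:ℝ)⁻¹ * ∑ i, z i) - (z p.2 - (N:ℝ)⁻¹ * ∑ i, z i))^2 := by
    intro z
    set g : Ω → ℝ := fun ω => (∑ j, (∑ a, W ω a j) * (z j - (N:ℝ)⁻¹ * ∑ i, z i)^2)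
      - (1/2) * ∑ p ∈ S, W ω p.1 p.1 * W ω p.1 p.2 *
          ((z p.1 - (N:ℝ)⁻¹ * ∑ i, z i) - (z p.2 - (N:ℝ)⁻¹ * ∑ i, z i))^2 with hgdef
    have hgint1 : Integrable (fun ω => ∑ j, (∑ a, W ω a j) * (z j - (N:ℝ)⁻¹ * ∑ i, z i)^2) μ := by
      apply integrable_finset_sum
      intro j _
      exact (integrable_finset_sum _ fun a _ => hInt a j).mul_const _
    have hgint2 : Integrable (fun ω => ∑ p ∈ S, W ω p.1 p.1 * W ω p.1 p.2 *
        ((z p.1 - (N:ℝ)⁻¹ * ∑ i, z i) - (z p.2 - (N:ℝ)⁻¹ * ∑ i, z i))^2) μ := by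
      apply integrable_finset_sum
      intro p _
      exact (hIntProd p.1 p.1 p.1 p.2).mul_const _
    have hgint : Integrable g μ := hgint1.sub (hgint2.const_mul _)
    have hptwise : ∀ᵐ ω ∂μ,
        (∑ a, ((W ω - (N : ℝ)⁻¹ • ((Matrix.of fun _ _ => (1 : ℝ)) * W ω)).mulVec z a) ^ 2) ≤ g ω := by
      filter_upwards [hrow] with ω hω
      exact pointwise_bound hN (W ω) hω.1 hω.2 S z
    have hle : (∫ ω, ∑ a, ((W ω - (N : ℝ)⁻¹ • ((Matrix.of fun _ _ => (1 : ℝ)) * W ω)).mulVec z a) ^ 2 ∂μ)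
        ≤ ∫ ω, g ω ∂μ := by
      apply integral_mono_of_nonneg
      · exact Filter.Eventually.of_forall fun ω => Finset.sum_nonneg fun a _ => sq_nonneg _
      · exact hgint
      · exact hptwise
    have hEg : ∫ ω, g ω ∂μ = (∑ j, (z j - (N:ℝ)⁻¹ * ∑ i, z i)^2)
        - (1/2) * ∑ p ∈ S, (∫ ω, W ω p.1 p.1 * W ω p.1 p.2 ∂μ) *
            ((z p.1 - (N:ℝ)⁻¹ * ∑ i, z i) - (z p.2 - (N:ℝ)⁻¹ * ∑ i, z i))^2 := by
      rw [hgdef]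
      rw [integral_sub hgint1 (hgint2.const_mul _)]
      congr 1
      · rw [integral_finset_sum _ fun j _ => (integrable_finset_sum _ fun a _ => hInt a j).mul_const _]
        apply Finset.sum_congr rfl
        intro j _
        rw [integral_mul_const, integral_finset_sum _ fun a _ => hInt a j, hEcol j, one_mul]
      · rw [integral_const_mul]
        congr 1
        rw [integral_finset_sum _ fun p _ => (hIntProd p.1 p.1 p.1 p.2).mul_const _]
        exact Finset.sum_congr rfl fun p _ => integral_mul_const _ _
    exact hle.trans_eq hEg
  -- case split on N
  by_cases hN2 : 2 ≤ N
  · -- S is nonempty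
    have hSne : S.Nonempty := by
      obtain ⟨w⟩ := hG.preconnected ⟨0, by omega⟩ ⟨1, by omega⟩
      cases w with
      | @cons _ b _ h p => exact ⟨(⟨0, by omega⟩, b), (hSdef (⟨0, by omega⟩, b)).mpr h⟩
    set F : Fin N × Fin N → ℝ := fun p => ∫ ω, W ω p.1 p.1 * W ω p.1 p.2 ∂μ with hFdef
    set δ : ℝ := S.inf' hSne F with hδdef
    have hδpos : 0 < δ := by
      rw [hδdef, Finset.lt_inf'_iff]
      intro p hp
      exact hFpos p.1 p.2 ((hSdef p).mp hp)
    obtain ⟨ε, hεpos, hεall⟩ := graph_gap G hG S hSdef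
    set κ : ℝ := min (δ * ε / 2) (1/2) with hκdef
    have hκpos : 0 < κ := lt_min (by positivity) (by norm_num)
    have hκhalf : κ ≤ 1/2 := min_le_right _ _
    have hκle : κ ≤ δ * ε / 2 := min_le_left _ _
    refine ⟨1 - κ, ⟨by linarith, by linarith⟩, ?_⟩
    intro z
    set cc : ℝ := (N:ℝ)⁻¹ * ∑ i, z i with hcc
    have hNR : (0:ℝ) < N := by exact_mod_cast hN
    have hsum0 : ∑ a, (z a - cc) = 0 := by
      rw [Finset.sum_sub_distrib, Finset.sum_const, Finset.card_univ, Fintype.card_fin,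
        nsmul_eq_mul, hcc]
      field_simp
      ring
    have hgap' : ε * ∑ a, (z a - cc)^2 ≤ ∑ p ∈ S, ((z p.1 - cc) - (z p.2 - cc))^2 :=
      hεall (fun j => z j - cc) hsum0
    have hm := master z
    have hP : δ * ∑ p ∈ S, ((z p.1 - cc) - (z p.2 - cc))^2
        ≤ ∑ p ∈ S, F p * ((z p.1 - cc) - (z p.2 - cc))^2 := by
      rw [Finset.mul_sum]
      apply Finset.sum_le_sum
      intro p hp
      exact mul_le_mul_of_nonneg_right (Finset.inf'_le F hp) (sq_nonneg _)
    have hY2 : ∑ a, (z a - cc)^2 ≤ ∑ a, (z a)^2 := sq_sum_sub_mean z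
    have hYnn : (0:ℝ) ≤ ∑ a, (z a - cc)^2 := Finset.sum_nonneg fun a _ => sq_nonneg _
    have hmul1 : δ * (ε * ∑ a, (z a - cc)^2) ≤ δ * ∑ p ∈ S, ((z p.1 - cc) - (z p.2 - cc))^2 :=
      mul_le_mul_of_nonneg_left hgap' hδpos.le
    have heq1 : δ * (ε * ∑ a, (z a - cc)^2) = 2 * ((δ * ε / 2) * ∑ a, (z a - cc)^2) := by ring
    have hκY : κ * ∑ a, (z a - cc)^2 ≤ (δ * ε / 2) * ∑ a, (z a - cc)^2 :=
      mul_le_mul_of_nonneg_right hκle hYnn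
    have hfin : (1 - κ) * ∑ a, (z a - cc)^2 ≤ (1 - κ) * ∑ a, (z a)^2 :=
      mul_le_mul_of_nonneg_left hY2 (by linarith)
    have heq2 : (1 - κ) * ∑ a, (z a - cc)^2 = (∑ a, (z a - cc)^2) - κ * ∑ a, (z a - cc)^2 := by
      ring
    linarith [hm, hP, hmul1, hκY, hfin]
  · -- N = 1
    have hN1 : N = 1 := by omega
    subst hN1
    refine ⟨1/2, ⟨by norm_num, by norm_num⟩, ?_⟩
    intro z
    have hm := master z
    have h1 : ∑ j : Fin 1, (z j - ((1:ℕ):ℝ)⁻¹ * ∑ i, z i)^2 = 0 := by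
      simp
    have h2 : ∑ p ∈ S, (∫ ω, W ω p.1 p.1 * W ω p.1 p.2 ∂μ) *
        ((z p.1 - ((1:ℕ):ℝ)⁻¹ * ∑ i, z i) - (z p.2 - ((1:ℕ):ℝ)⁻¹ * ∑ i, z i))^2 = 0 := by
      apply Finset.sum_eq_zero
      intro p _
      have hpp : p.1 = p.2 := Subsingleton.elim _ _
      rw [hpp]
      ring
    rw [h1, h2] at hm
    have hznn : (0:ℝ) ≤ ∑ a, (z a)^2 := Finset.sum_nonneg fun a _ => sq_nonneg _
    linarith
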